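/- Let C₀ ⊆ C and D₀ ⊆ D be full subcategories with a functor f : C → D restricting to g : C₀ → D₀, where: (a) C₀ → C, D₀ → D are fully faithful; (b) the square is a pullback; (c) whenever there is a morphism d → j(d₀) with d₀ ∈ D₀, then d ∈ D₀. Then for each d₀ ∈ D₀, the comma category C₀ ×_{D₀} (D₀)_{/d₀} maps by an equivalence to C ×_D D_{/d₀}. -/

import Mathlib

universe u

open CategoryTheory

/-- Let `D₀ ⊆ D` be a full subcategory (cut out by `Q : D → Prop`),
`f : C ⥤ D` a functor, and let `C₀ ⊆ C` be the full subcategory `f⁻¹(D₀)` (so that the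
square of inclusions and induced functor `g : C₀ ⥤ D₀` is a pullback of fully faithful
inclusions).  Assume that whenever there is a morphism `d ⟶ d₀` in `D` with `d₀ ∈ D₀`,
then `d ∈ D₀`.  Then for each `d₀ ∈ D₀` the canonical comparison functor
`C₀ ×_{D₀} (D₀)_{/d₀} ⥤ C ×_D D_{/d₀}` between comma categories is an equivalence. -/
theorem stmt7 {C D : Type u} [Category.{u} C] [Category.{u} D]
    (f : C ⥤ D) (Q : D → Prop)
    (hQ : ∀ (d d₀ : D), Q d₀ → (d ⟶ d₀) → Q d)
    (d₀ : ObjectProperty.FullSubcategory Q) :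
    (CostructuredArrow.post
        (ObjectProperty.lift Q (ObjectProperty.ι (fun c => Q (f.obj c)) ⋙ f)
          (fun c => c.2))
        (ObjectProperty.ι Q) d₀ ⋙
      CostructuredArrow.pre (ObjectProperty.ι (fun c => Q (f.obj c))) f
        ((ObjectProperty.ι Q).obj d₀)).IsEquivalence := by
  refine { faithful := inferInstance, full := inferInstance, essSurj := ⟨fun Y => ?_⟩ }
  have hY : Q (f.obj Y.left) := hQ _ _ d₀.2 Y.hom
  exact ⟨⟨⟨Y.left, hY⟩, ⟨⟨⟩⟩, ObjectProperty.homMk Y.hom⟩, ⟨CostructuredArrow.isoMk (Iso.refl _) (by show f.map (𝟙 Y.left) ≫ Y.hom = Y.hom; simp)⟩⟩
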